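/- Combining the ELBO and the mutual-information bounds: for finitely-valued random variables with strictly positive joint distribution and any full-support variational pmfs Q(Z|G) and Q(Ĝ_c), the GRM objective satisfies E[log P(Ĝ_c|G)] − I(Ĝ_c;D) ≥ E[log P(Ĝ_c|G,Z)] − KL(Q(Z|G)‖P(Z|G)) − E[KL(P(Ĝ_c|D,Z)‖Q(Ĝ_c))] + E[log P(Z|D,Ĝ_c)] + H(Z|D). -/

import Mathlib

open Finset

/-- Marginal pmf of a random variable `X` on a finite probability space with pmf `p`. -/
noncomputable def margPMF {Ω α : Type*} [Fintype Ω] [DecidableEq α]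
    (p : Ω → ℝ) (X : Ω → α) (x : α) : ℝ :=
  ∑ ω, if X ω = x then p ω else 0

/-- Mutual information `I(X;Y) = ∑ p(x,y) log (p(x,y) / (p(x) p(y)))`. -/
noncomputable def mutInfo {Ω α β : Type*} [Fintype Ω] [Fintype α] [Fintype β]
    [DecidableEq α] [DecidableEq β] (p : Ω → ℝ) (X : Ω → α) (Y : Ω → β) : ℝ :=
  ∑ x, ∑ y,
    margPMF p (fun ω => (X ω, Y ω)) (x, y) *
      Real.log (margPMF p (fun ω => (X ω, Y ω)) (x, y) / (margPMF p X x * margPMF p Y y))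

section aux
variable {Ω α β γ' : Type*} [Fintype Ω]

lemma margPMF_congr [DecidableEq α] [DecidableEq β] (p : Ω → ℝ) (X : Ω → α) (Y : Ω → β)
    (x : α) (y : β) (h : ∀ ω, X ω = x ↔ Y ω = y) :
    margPMF p X x = margPMF p Y y :=
  Finset.sum_congr rfl fun ω _ => by
    by_cases hx : X ω = x
    · rw [if_pos hx, if_pos ((h ω).mp hx)]
    · rw [if_neg hx, if_neg (fun hy => hx ((h ω).mpr hy))]

lemma margPMF_pos [DecidableEq α] (p : Ω → ℝ) (hp : ∀ ω, 0 < p ω) (X : Ω → α) (x : α)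
    (h : ∃ ω, X ω = x) : 0 < margPMF p X x := by
  obtain ⟨ω₀, h₀⟩ := h
  refine Finset.sum_pos' (fun ω _ => by split_ifs with h; exacts [(hp ω).le, le_rfl])
    ⟨ω₀, Finset.mem_univ _, ?_⟩
  rw [if_pos h₀]; exact hp ω₀

lemma exists_of_margPMF_pos [DecidableEq α] (p : Ω → ℝ) (X : Ω → α) (x : α)
    (h : 0 < margPMF p X x) : ∃ ω, X ω = x := by
  by_contra hc
  push_neg at hc
  have h0 : margPMF p X x = 0 := Finset.sum_eq_zero fun ω _ => if_neg (hc ω)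
  rw [h0] at h; exact lt_irrefl 0 h

lemma sum_margPMF_mul [DecidableEq α] [Fintype α] (p : Ω → ℝ) (X : Ω → α) (f : α → ℝ) :
    ∑ x, margPMF p X x * f x = ∑ ω, p ω * f (X ω) := by
  unfold margPMF
  simp only [Finset.sum_mul, ite_mul, zero_mul]
  rw [Finset.sum_comm]
  refine Finset.sum_congr rfl fun ω _ => ?_
  simp

lemma sum_margPMF [DecidableEq α] [Fintype α] (p : Ω → ℝ) (X : Ω → α) :
    ∑ x, margPMF p X x = ∑ ω, p ω := by
  simpa using sum_margPMF_mul p X (fun _ => 1)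

lemma sum_margPMF_mul₂ [DecidableEq α] [DecidableEq β] [Fintype α] [Fintype β]
    (p : Ω → ℝ) (X : Ω → α) (Y : Ω → β) (f : α → β → ℝ) :
    ∑ x, ∑ y, margPMF p (fun ω => (X ω, Y ω)) (x, y) * f x y = ∑ ω, p ω * f (X ω) (Y ω) := by
  rw [← sum_margPMF_mul p (fun ω => (X ω, Y ω)) (fun v => f v.1 v.2), Fintype.sum_prod_type]

lemma sum_margPMF_mul₃ [DecidableEq α] [DecidableEq β] [DecidableEq γ']
    [Fintype α] [Fintype β] [Fintype γ']
    (p : Ω → ℝ) (X : Ω → α) (Y : Ω → β) (W : Ω → γ') (f : α → β → γ' → ℝ) :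
    ∑ x, ∑ y, ∑ w, margPMF p (fun ω => (X ω, Y ω, W ω)) (x, y, w) * f x y w
      = ∑ ω, p ω * f (X ω) (Y ω) (W ω) := by
  rw [← sum_margPMF_mul p (fun ω => (X ω, Y ω, W ω)) (fun v => f v.1 v.2.1 v.2.2),
    Fintype.sum_prod_type]
  exact Finset.sum_congr rfl fun x _ => by rw [Fintype.sum_prod_type]

lemma sum_marg_last [DecidableEq α] [DecidableEq β] [DecidableEq γ'] [Fintype γ']
    (p : Ω → ℝ) (X : Ω → α) (Y : Ω → β) (W : Ω → γ') (x : α) (y : β) :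
    ∑ w, margPMF p (fun ω => (X ω, Y ω, W ω)) (x, y, w)
      = margPMF p (fun ω => (X ω, Y ω)) (x, y) := by
  unfold margPMF
  rw [Finset.sum_comm]
  refine Finset.sum_congr rfl fun ω _ => ?_
  by_cases hx : X ω = x <;> by_cases hy : Y ω = y <;> simp [Prod.ext_iff, hx, hy]

lemma jensen_log_sum {ι : Type*} [Fintype ι] (Q f : ι → ℝ) (hQ : ∀ i, 0 < Q i)
    (hQ1 : ∑ i, Q i = 1) (hf : ∀ i, 0 < f i) :
    ∑ i, Q i * Real.log (f i / Q i) ≤ Real.log (∑ i, f i) := by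
  have hne : Nonempty ι := by
    by_contra h
    rw [not_nonempty_iff] at h
    rw [Finset.univ_eq_empty, Finset.sum_empty] at hQ1
    norm_num at hQ1
  have hS : 0 < ∑ i, f i := Finset.sum_pos (fun i _ => hf i) Finset.univ_nonempty
  set S := ∑ i, f i with hSdef
  have key : ∀ i, Q i * Real.log (f i / Q i) ≤ f i / S - Q i + Q i * Real.log S := by
    intro i
    have h2 : Real.log (f i / (Q i * S)) = Real.log (f i / Q i) - Real.log S := by
      rw [← div_div, Real.log_div (ne_of_gt (div_pos (hf i) (hQ i))) (ne_of_gt hS)]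
    have h1 : Real.log (f i / (Q i * S)) ≤ f i / (Q i * S) - 1 :=
      Real.log_le_sub_one_of_pos (div_pos (hf i) (mul_pos (hQ i) hS))
    have h3 : Q i * (f i / (Q i * S)) = f i / S := by
      rw [← mul_div_assoc, mul_div_mul_left _ _ (ne_of_gt (hQ i))]
    nlinarith [hQ i, mul_le_mul_of_nonneg_left h1 (hQ i).le]
  calc ∑ i, Q i * Real.log (f i / Q i)
      ≤ ∑ i, (f i / S - Q i + Q i * Real.log S) := Finset.sum_le_sum fun i _ => key i
    _ = (∑ i, f i) / S - (∑ i, Q i) + (∑ i, Q i) * Real.log S := by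
        rw [Finset.sum_add_distrib, Finset.sum_sub_distrib, ← Finset.sum_div, ← Finset.sum_mul]
    _ = Real.log S := by
        rw [hQ1, ← hSdef]
        field_simp
        ring

lemma kl_nonneg {ι : Type*} [Fintype ι] (P Q : ι → ℝ) (hP : ∀ i, 0 < P i) (hQ : ∀ i, 0 < Q i)
    (hP1 : ∑ i, P i = 1) (hQ1 : ∑ i, Q i = 1) :
    0 ≤ ∑ i, P i * Real.log (P i / Q i) := by
  have key : ∀ i, P i - Q i ≤ P i * Real.log (P i / Q i) := by
    intro i
    have h1 : Real.log (Q i / P i) ≤ Q i / P i - 1 :=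
      Real.log_le_sub_one_of_pos (div_pos (hQ i) (hP i))
    have h2 : Real.log (P i / Q i) = -Real.log (Q i / P i) := by
      rw [← Real.log_inv, inv_div]
    have h3 : P i * (Q i / P i) = Q i := by
      rw [mul_comm, div_mul_cancel₀ _ (ne_of_gt (hP i))]
    rw [h2]
    nlinarith [hP i, mul_le_mul_of_nonneg_left h1 (hP i).le]
  calc (0:ℝ) = (∑ i, P i) - (∑ i, Q i) := by rw [hP1, hQ1]; ring
    _ = ∑ i, (P i - Q i) := by rw [Finset.sum_sub_distrib]
    _ ≤ ∑ i, P i * Real.log (P i / Q i) := Finset.sum_le_sum fun i _ => key i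

end aux

/-- Theorem 3.1, ELBO for the GRM objective: for finitely-valued
random variables `Ĝ_c` (`Gh`), `G`, `Z`, `D` on a finite probability space with
strictly positive joint distribution, and any full-support variational pmfs
`Qz = Q(Z|G)` (one pmf per value of `G`) and `Qg = Q(Ĝ_c)`,
`E[log P(Ĝ_c|G)] − I(Ĝ_c;D)
  ≥ E_{Q}[log P(Ĝ_c|G,Z)] − E[KL(Q(Z|G)‖P(Z|G))]
    − E[KL(P(Ĝ_c|D,Z)‖Q(Ĝ_c))] + E[log P(Z|D,Ĝ_c)] + H(Z|D)`. -/
theorem grm_elbo {Ω γA γB γC γD : Type*}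
    [Fintype Ω] [Fintype γA] [Fintype γB] [Fintype γC] [Fintype γD]
    [DecidableEq γA] [DecidableEq γB] [DecidableEq γC] [DecidableEq γD]
    (p : Ω → ℝ) (hp : ∀ ω, 0 < p ω) (hsum : ∑ ω, p ω = 1)
    (Gh : Ω → γA) (G : Ω → γC) (Z : Ω → γB) (D : Ω → γD)
    (hpos : ∀ a c b d, 0 < margPMF p (fun ω => (Gh ω, G ω, Z ω, D ω)) (a, c, b, d))
    (Qz : γC → γB → ℝ) (hQz : ∀ c b, 0 < Qz c b) (hQz1 : ∀ c, ∑ b, Qz c b = 1)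
    (Qg : γA → ℝ) (hQg : ∀ a, 0 < Qg a) (hQg1 : ∑ a, Qg a = 1) :
    (∑ ω, p ω *
        Real.log (margPMF p (fun ω' => (Gh ω', G ω')) (Gh ω, G ω) / margPMF p G (G ω)))
      - mutInfo p Gh D ≥
    -- E_{Q(Z|G)}[log P(Ĝ_c | G, Z)]
    (∑ ω, p ω * ∑ b, Qz (G ω) b *
        Real.log (margPMF p (fun ω' => (Gh ω', G ω', Z ω')) (Gh ω, G ω, b) /
          margPMF p (fun ω' => (G ω', Z ω')) (G ω, b)))
    -- − E[KL(Q(Z|G) ‖ P(Z|G))]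
    - (∑ ω, p ω * ∑ b, Qz (G ω) b *
        Real.log (Qz (G ω) b /
          (margPMF p (fun ω' => (Z ω', G ω')) (b, G ω) / margPMF p G (G ω))))
    -- − E[KL(P(Ĝ_c|D,Z) ‖ Q(Ĝ_c))]
    - (∑ ω, p ω * ∑ a,
        (margPMF p (fun ω' => (Gh ω', D ω', Z ω')) (a, D ω, Z ω) /
            margPMF p (fun ω' => (D ω', Z ω')) (D ω, Z ω)) *
          Real.log ((margPMF p (fun ω' => (Gh ω', D ω', Z ω')) (a, D ω, Z ω) /
              margPMF p (fun ω' => (D ω', Z ω')) (D ω, Z ω)) / Qg a))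
    -- + E[log P(Z|D,Ĝ_c)]
    + (∑ ω, p ω *
        Real.log (margPMF p (fun ω' => (Z ω', D ω', Gh ω')) (Z ω, D ω, Gh ω) /
          margPMF p (fun ω' => (D ω', Gh ω')) (D ω, Gh ω)))
    -- + H(Z|D)
    + (- ∑ ω, p ω *
        Real.log (margPMF p (fun ω' => (Z ω', D ω')) (Z ω, D ω) / margPMF p D (D ω))) := by
    classical
  have hΩ : Nonempty Ω := by
    by_contra h
    rw [not_nonempty_iff] at h
    rw [Finset.univ_eq_empty, Finset.sum_empty] at hsum
    norm_num at hsum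
  obtain ⟨ω₀⟩ := hΩ
  have hex : ∀ a c b d, ∃ ω, Gh ω = a ∧ G ω = c ∧ Z ω = b ∧ D ω = d := by
    intro a c b d
    obtain ⟨ω, hω⟩ := exists_of_margPMF_pos p _ _ (hpos a c b d)
    exact ⟨ω, by simpa [Prod.ext_iff] using hω⟩
  -- Part 1: the ELBO (Jensen) inequality, pointwise in ω.
  have hA : (∑ ω, p ω * ∑ b, Qz (G ω) b *
        Real.log (margPMF p (fun ω' => (Gh ω', G ω', Z ω')) (Gh ω, G ω, b) /
          margPMF p (fun ω' => (G ω', Z ω')) (G ω, b)))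
      - (∑ ω, p ω * ∑ b, Qz (G ω) b *
        Real.log (Qz (G ω) b /
          (margPMF p (fun ω' => (Z ω', G ω')) (b, G ω) / margPMF p G (G ω))))
      ≤ ∑ ω, p ω *
        Real.log (margPMF p (fun ω' => (Gh ω', G ω')) (Gh ω, G ω) / margPMF p G (G ω)) := by
    rw [← Finset.sum_sub_distrib]
    refine Finset.sum_le_sum fun ω _ => ?_
    rw [← mul_sub]
    refine mul_le_mul_of_nonneg_left ?_ (hp ω).le
    rw [← Finset.sum_sub_distrib]
    have hPc : 0 < margPMF p G (G ω) := margPMF_pos p hp _ _ ⟨ω, rfl⟩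
    have hGhG : 0 < margPMF p (fun ω' => (Gh ω', G ω')) (Gh ω, G ω) :=
      margPMF_pos p hp _ _ ⟨ω, rfl⟩
    have hGhGZ : ∀ b, 0 < margPMF p (fun ω' => (Gh ω', G ω', Z ω')) (Gh ω, G ω, b) := by
      intro b
      obtain ⟨ω', h1, h2, h3, _⟩ := hex (Gh ω) (G ω) b (D ω)
      exact margPMF_pos p hp _ _ ⟨ω', by simp [h1, h2, h3]⟩
    have hGZ : ∀ b, 0 < margPMF p (fun ω' => (G ω', Z ω')) (G ω, b) := by
      intro b
      obtain ⟨ω', _, h2, h3, _⟩ := hex (Gh ω) (G ω) b (D ω)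
      exact margPMF_pos p hp _ _ ⟨ω', by simp [h2, h3]⟩
    have hZG : ∀ b, 0 < margPMF p (fun ω' => (Z ω', G ω')) (b, G ω) := by
      intro b
      obtain ⟨ω', _, h2, h3, _⟩ := hex (Gh ω) (G ω) b (D ω)
      exact margPMF_pos p hp _ _ ⟨ω', by simp [h2, h3]⟩
    have step : ∀ b, Qz (G ω) b *
          Real.log (margPMF p (fun ω' => (Gh ω', G ω', Z ω')) (Gh ω, G ω, b) /
            margPMF p (fun ω' => (G ω', Z ω')) (G ω, b))
        - Qz (G ω) b *
          Real.log (Qz (G ω) b /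
            (margPMF p (fun ω' => (Z ω', G ω')) (b, G ω) / margPMF p G (G ω)))
        = Qz (G ω) b *
          Real.log ((margPMF p (fun ω' => (Gh ω', G ω', Z ω')) (Gh ω, G ω, b) /
            margPMF p G (G ω)) / Qz (G ω) b) := by
      intro b
      have hyz : margPMF p (fun ω' => (G ω', Z ω')) (G ω, b)
          = margPMF p (fun ω' => (Z ω', G ω')) (b, G ω) :=
        margPMF_congr p _ _ _ _ (fun ω' => by simp only [Prod.mk.injEq]; tauto)
      rw [hyz]
      rw [Real.log_div (hGhGZ b).ne' (hZG b).ne',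
        Real.log_div (hQz (G ω) b).ne' (div_pos (hZG b) hPc).ne',
        Real.log_div (hZG b).ne' hPc.ne',
        Real.log_div (div_pos (hGhGZ b) hPc).ne' (hQz (G ω) b).ne',
        Real.log_div (hGhGZ b).ne' hPc.ne']
      ring
    calc ∑ b, (Qz (G ω) b *
          Real.log (margPMF p (fun ω' => (Gh ω', G ω', Z ω')) (Gh ω, G ω, b) /
            margPMF p (fun ω' => (G ω', Z ω')) (G ω, b))
        - Qz (G ω) b *
          Real.log (Qz (G ω) b /
            (margPMF p (fun ω' => (Z ω', G ω')) (b, G ω) / margPMF p G (G ω))))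
        = ∑ b, Qz (G ω) b *
          Real.log ((margPMF p (fun ω' => (Gh ω', G ω', Z ω')) (Gh ω, G ω, b) /
            margPMF p G (G ω)) / Qz (G ω) b) :=
          Finset.sum_congr rfl fun b _ => step b
      _ ≤ Real.log (∑ b, margPMF p (fun ω' => (Gh ω', G ω', Z ω')) (Gh ω, G ω, b) /
            margPMF p G (G ω)) :=
          jensen_log_sum _ _ (hQz (G ω)) (hQz1 (G ω)) (fun b => div_pos (hGhGZ b) hPc)
      _ = Real.log (margPMF p (fun ω' => (Gh ω', G ω')) (Gh ω, G ω) / margPMF p G (G ω)) := by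
          rw [← Finset.sum_div, sum_marg_last]
  -- Rewriting the mutual information as an expectation over ω.
  have hB : mutInfo p Gh D = ∑ ω, p ω *
      Real.log (margPMF p (fun ω' => (Gh ω', D ω')) (Gh ω, D ω) /
        (margPMF p Gh (Gh ω) * margPMF p D (D ω))) := by
    unfold mutInfo
    exact sum_margPMF_mul₂ p Gh D (fun x y =>
      Real.log (margPMF p (fun ω => (Gh ω, D ω)) (x, y) / (margPMF p Gh x * margPMF p D y)))
  -- Rewriting the KL-to-Qg term as an expectation over ω.
  have hDZpos : ∀ d b, 0 < margPMF p (fun ω' => (D ω', Z ω')) (d, b) := by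
    intro d b
    obtain ⟨ω', _, _, h3, h4⟩ := hex (Gh ω₀) (G ω₀) b d
    exact margPMF_pos p hp _ _ ⟨ω', by simp [h3, h4]⟩
  have hC : (∑ ω, p ω * ∑ a,
        (margPMF p (fun ω' => (Gh ω', D ω', Z ω')) (a, D ω, Z ω) /
            margPMF p (fun ω' => (D ω', Z ω')) (D ω, Z ω)) *
          Real.log ((margPMF p (fun ω' => (Gh ω', D ω', Z ω')) (a, D ω, Z ω) /
              margPMF p (fun ω' => (D ω', Z ω')) (D ω, Z ω)) / Qg a))
      = ∑ ω, p ω *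
        Real.log (margPMF p (fun ω' => (Gh ω', D ω', Z ω')) (Gh ω, D ω, Z ω) /
          (margPMF p (fun ω' => (D ω', Z ω')) (D ω, Z ω) * Qg (Gh ω))) := by
    calc (∑ ω, p ω * ∑ a,
        (margPMF p (fun ω' => (Gh ω', D ω', Z ω')) (a, D ω, Z ω) /
            margPMF p (fun ω' => (D ω', Z ω')) (D ω, Z ω)) *
          Real.log ((margPMF p (fun ω' => (Gh ω', D ω', Z ω')) (a, D ω, Z ω) /
              margPMF p (fun ω' => (D ω', Z ω')) (D ω, Z ω)) / Qg a))
        = ∑ d, ∑ b, margPMF p (fun ω' => (D ω', Z ω')) (d, b) * (∑ a,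
          (margPMF p (fun ω' => (Gh ω', D ω', Z ω')) (a, d, b) /
              margPMF p (fun ω' => (D ω', Z ω')) (d, b)) *
            Real.log ((margPMF p (fun ω' => (Gh ω', D ω', Z ω')) (a, d, b) /
                margPMF p (fun ω' => (D ω', Z ω')) (d, b)) / Qg a)) :=
        (sum_margPMF_mul₂ p D Z (fun d b => ∑ a,
          (margPMF p (fun ω' => (Gh ω', D ω', Z ω')) (a, d, b) /
              margPMF p (fun ω' => (D ω', Z ω')) (d, b)) *
            Real.log ((margPMF p (fun ω' => (Gh ω', D ω', Z ω')) (a, d, b) /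
                margPMF p (fun ω' => (D ω', Z ω')) (d, b)) / Qg a))).symm
      _ = ∑ d, ∑ b, ∑ a, margPMF p (fun ω' => (Gh ω', D ω', Z ω')) (a, d, b) *
            Real.log (margPMF p (fun ω' => (Gh ω', D ω', Z ω')) (a, d, b) /
              (margPMF p (fun ω' => (D ω', Z ω')) (d, b) * Qg a)) := by
          refine Finset.sum_congr rfl fun d _ => Finset.sum_congr rfl fun b _ => ?_
          rw [Finset.mul_sum]
          refine Finset.sum_congr rfl fun a _ => ?_
          have hdz := hDZpos d b
          have hcl : margPMF p (fun ω' => (D ω', Z ω')) (d, b) *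
              (margPMF p (fun ω' => (Gh ω', D ω', Z ω')) (a, d, b) /
                margPMF p (fun ω' => (D ω', Z ω')) (d, b))
              = margPMF p (fun ω' => (Gh ω', D ω', Z ω')) (a, d, b) := by
            field_simp
          rw [div_div, ← mul_assoc, hcl]
      _ = ∑ a, ∑ d, ∑ b, margPMF p (fun ω' => (Gh ω', D ω', Z ω')) (a, d, b) *
            Real.log (margPMF p (fun ω' => (Gh ω', D ω', Z ω')) (a, d, b) /
              (margPMF p (fun ω' => (D ω', Z ω')) (d, b) * Qg a)) :=
          (Finset.sum_congr rfl fun d _ => Finset.sum_comm).trans Finset.sum_comm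
      _ = ∑ ω, p ω *
        Real.log (margPMF p (fun ω' => (Gh ω', D ω', Z ω')) (Gh ω, D ω, Z ω) /
          (margPMF p (fun ω' => (D ω', Z ω')) (D ω, Z ω) * Qg (Gh ω))) :=
          sum_margPMF_mul₃ p Gh D Z (fun a d b =>
            Real.log (margPMF p (fun ω' => (Gh ω', D ω', Z ω')) (a, d, b) /
              (margPMF p (fun ω' => (D ω', Z ω')) (d, b) * Qg a)))
  -- Pointwise log identity: the information terms collapse to log(P(Ĝ)/Qg).
  have hD4 : ∀ ω,
      Real.log (margPMF p (fun ω' => (Gh ω', D ω', Z ω')) (Gh ω, D ω, Z ω) /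
          (margPMF p (fun ω' => (D ω', Z ω')) (D ω, Z ω) * Qg (Gh ω)))
      - Real.log (margPMF p (fun ω' => (Gh ω', D ω')) (Gh ω, D ω) /
          (margPMF p Gh (Gh ω) * margPMF p D (D ω)))
      - Real.log (margPMF p (fun ω' => (Z ω', D ω', Gh ω')) (Z ω, D ω, Gh ω) /
          margPMF p (fun ω' => (D ω', Gh ω')) (D ω, Gh ω))
      + Real.log (margPMF p (fun ω' => (Z ω', D ω')) (Z ω, D ω) / margPMF p D (D ω))
      = Real.log (margPMF p Gh (Gh ω) / Qg (Gh ω)) := by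
    intro ω
    have e1 : margPMF p (fun ω' => (Gh ω', D ω', Z ω')) (Gh ω, D ω, Z ω)
        = margPMF p (fun ω' => (Z ω', D ω', Gh ω')) (Z ω, D ω, Gh ω) :=
      margPMF_congr p _ _ _ _ (fun ω' => by simp only [Prod.mk.injEq]; tauto)
    have e2 : margPMF p (fun ω' => (D ω', Z ω')) (D ω, Z ω)
        = margPMF p (fun ω' => (Z ω', D ω')) (Z ω, D ω) :=
      margPMF_congr p _ _ _ _ (fun ω' => by simp only [Prod.mk.injEq]; tauto)
    have e3 : margPMF p (fun ω' => (Gh ω', D ω')) (Gh ω, D ω)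
        = margPMF p (fun ω' => (D ω', Gh ω')) (D ω, Gh ω) :=
      margPMF_congr p _ _ _ _ (fun ω' => by simp only [Prod.mk.injEq]; tauto)
    have pZDGh : 0 < margPMF p (fun ω' => (Z ω', D ω', Gh ω')) (Z ω, D ω, Gh ω) :=
      margPMF_pos p hp _ _ ⟨ω, rfl⟩
    have pZD : 0 < margPMF p (fun ω' => (Z ω', D ω')) (Z ω, D ω) :=
      margPMF_pos p hp _ _ ⟨ω, rfl⟩
    have pDGh : 0 < margPMF p (fun ω' => (D ω', Gh ω')) (D ω, Gh ω) :=
      margPMF_pos p hp _ _ ⟨ω, rfl⟩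
    have pGh : 0 < margPMF p Gh (Gh ω) := margPMF_pos p hp _ _ ⟨ω, rfl⟩
    have pD : 0 < margPMF p D (D ω) := margPMF_pos p hp _ _ ⟨ω, rfl⟩
    have pQ : 0 < Qg (Gh ω) := hQg (Gh ω)
    rw [e1, e2, e3]
    rw [Real.log_div pZDGh.ne' (mul_pos pZD pQ).ne', Real.log_mul pZD.ne' pQ.ne',
      Real.log_div pDGh.ne' (mul_pos pGh pD).ne', Real.log_mul pGh.ne' pD.ne',
      Real.log_div pZDGh.ne' pDGh.ne', Real.log_div pZD.ne' pD.ne',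
      Real.log_div pGh.ne' pQ.ne']
    ring
  -- KL(P(Ĝ) ‖ Qg) ≥ 0.
  have hE : 0 ≤ ∑ ω, p ω * Real.log (margPMF p Gh (Gh ω) / Qg (Gh ω)) := by
    rw [← sum_margPMF_mul p Gh (fun a => Real.log (margPMF p Gh a / Qg a))]
    refine kl_nonneg _ _ (fun a => ?_) hQg ?_ hQg1
    · obtain ⟨ω', h1, _, _, _⟩ := hex a (G ω₀) (Z ω₀) (D ω₀)
      exact margPMF_pos p hp _ _ ⟨ω', h1⟩
    · rw [sum_margPMF p Gh]; exact hsum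
  -- Combine the mutual-information terms.
  have hG : (∑ ω, p ω * ∑ a,
        (margPMF p (fun ω' => (Gh ω', D ω', Z ω')) (a, D ω, Z ω) /
            margPMF p (fun ω' => (D ω', Z ω')) (D ω, Z ω)) *
          Real.log ((margPMF p (fun ω' => (Gh ω', D ω', Z ω')) (a, D ω, Z ω) /
              margPMF p (fun ω' => (D ω', Z ω')) (D ω, Z ω)) / Qg a))
      - mutInfo p Gh D
      - (∑ ω, p ω *
        Real.log (margPMF p (fun ω' => (Z ω', D ω', Gh ω')) (Z ω, D ω, Gh ω) /
          margPMF p (fun ω' => (D ω', Gh ω')) (D ω, Gh ω)))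
      + (∑ ω, p ω *
        Real.log (margPMF p (fun ω' => (Z ω', D ω')) (Z ω, D ω) / margPMF p D (D ω)))
      = ∑ ω, p ω * Real.log (margPMF p Gh (Gh ω) / Qg (Gh ω)) := by
    rw [hC, hB, ← Finset.sum_sub_distrib, ← Finset.sum_sub_distrib, ← Finset.sum_add_distrib]
    refine Finset.sum_congr rfl fun ω _ => ?_
    rw [← hD4 ω]
    ring
  linarith [hA, hE, hG]
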